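/- For an integer m ≥ 0 define J_m(r) = (1/2π) ∫₀^{2π} e^{i r sin θ} e^{-i m θ} dθ and f_m(r) = J_m(r)/r^m for r > 0. Define real numbers a_{j,k} and b_{j,k} for integers 0 ≤ j ≤ k by: a_{0,0} = 1; for all k ≥ 0, b_{k,k} = a_{k,k} and b_{j,k} = 2(j+1) a_{j+1,k} + a_{j,k} for 0 ≤ j ≤ k-1; and for all k ≥ 1, a_{0,k} = b_{0,k-1}, a_{j,k} = (2j+1) b_{j,k-1} + b_{j-1,k-1} for 1 ≤ j ≤ k-1, and a_{k,k} = b_{k-1,k-1}. Then a_{k,k} = b_{k,k} = 1 for all k, all the a_{j,k} and b_{j,k} are positive, and for every integer m ≥ 0, every integer k ≥ 0 and every r > 0: f_m^{(2k)}(r) = Σ_{j=0}^{k} (-1)^{j+k} a_{j,k} r^{2j} f_{m+k+j}(r) and f_m^{(2k+1)}(r) = Σ_{j=0}^{k} (-1)^{j+k+1} b_{j,k} r^{2j+1} f_{m+k+j+1}(r). -/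

import Mathlib

open MeasureTheory Complex Real intervalIntegral

/-- The Bessel function of the first kind of integer order `m`, defined by
`J_m(r) = (1/2π) ∫₀^{2π} e^{i r sin θ} e^{-i m θ} dθ`. -/
noncomputable def besselJ (m : ℕ) (r : ℝ) : ℂ :=
  (1 / (2 * Real.pi)) *
    ∫ θ in (0 : ℝ)..(2 * Real.pi),
      Complex.exp (Complex.I * r * Real.sin θ) * Complex.exp (-(Complex.I * m * θ))

/-- The function `f_m(r) = J_m(r) / r^m`. -/
noncomputable def fBessel (m : ℕ) (r : ℝ) : ℂ :=
  besselJ m r / (r : ℂ) ^ m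

noncomputable def besselJ' (m : ℕ) (r : ℝ) : ℂ :=
  (1 / (2 * Real.pi)) *
    ∫ θ in (0 : ℝ)..(2 * Real.pi),
      (Complex.I * Real.sin θ) *
        (Complex.exp (Complex.I * r * Real.sin θ) * Complex.exp (-(Complex.I * m * θ)))

lemma contE (m : ℕ) (x : ℝ) : Continuous (fun θ : ℝ =>
    Complex.exp (Complex.I * x * Real.sin θ) * Complex.exp (-(Complex.I * m * θ))) := by
  fun_prop

lemma hasDerivAt_besselJ (m : ℕ) (r : ℝ) : HasDerivAt (besselJ m) (besselJ' m r) r := by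
  have h := intervalIntegral.hasDerivAt_integral_of_dominated_loc_of_deriv_le
    (F := fun (x : ℝ) (θ : ℝ) =>
      Complex.exp (Complex.I * x * Real.sin θ) * Complex.exp (-(Complex.I * m * θ)))
    (F' := fun (x : ℝ) (θ : ℝ) => (Complex.I * Real.sin θ) *
      (Complex.exp (Complex.I * x * Real.sin θ) * Complex.exp (-(Complex.I * m * θ))))
    (a := (0:ℝ)) (b := 2 * Real.pi) (μ := volume) (x₀ := r) (bound := fun _ => 1) (s := Set.univ)
    Filter.univ_mem
    (Filter.Eventually.of_forall fun x => ((contE m x).aestronglyMeasurable))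
    ((contE m r).intervalIntegrable _ _)
    (((Continuous.mul (by fun_prop) (contE m r)).aestronglyMeasurable))
    ?_ ?_ ?_
  · exact h.2.const_mul ((1 : ℂ) / (2 * Real.pi))
  · refine Filter.Eventually.of_forall fun θ _ x _ => ?_
    rw [norm_mul, norm_mul, norm_mul]
    have hs : ‖((Real.sin θ : ℝ) : ℂ)‖ ≤ 1 := by
      rw [Complex.norm_real]
      exact abs_le.2 ⟨neg_one_le_sin θ, sin_le_one θ⟩
    have he1 : ‖Complex.exp (Complex.I * x * Real.sin θ)‖ = 1 := by
      rw [Complex.norm_exp]; simp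
    have he2 : ‖Complex.exp (-(Complex.I * m * θ))‖ = 1 := by
      rw [Complex.norm_exp]; simp
    rw [he1, he2, Complex.norm_I]
    simpa using hs
  · exact intervalIntegrable_const
  · refine Filter.Eventually.of_forall fun θ _ x _ => ?_
    have h1 : HasDerivAt (fun z : ℂ => Complex.I * z * Real.sin θ)
        (Complex.I * Real.sin θ) (x : ℂ) := by
      simpa using ((hasDerivAt_id (x : ℂ)).const_mul Complex.I).mul_const
        ((Real.sin θ : ℂ))
    have h2 := (h1.cexp.mul_const (Complex.exp (-(Complex.I * m * θ)))).comp_ofReal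
    refine h2.congr_deriv ?_
    ring
lemma besselJ_rec (m : ℕ) (r : ℝ) :
    (r : ℂ) * besselJ' m r = m * besselJ m r - r * besselJ (m + 1) r := by
  set E : ℝ → ℂ := fun θ =>
    Complex.exp (Complex.I * r * Real.sin θ) * Complex.exp (-(Complex.I * m * θ)) with hE
  set E₁ : ℝ → ℂ := fun θ =>
    Complex.exp (Complex.I * r * Real.sin θ) * Complex.exp (-(Complex.I * (m + 1 : ℕ) * θ)) with hE₁
  -- derivative of E
  have hd : ∀ θ : ℝ, HasDerivAt E
      ((Complex.I * r * Real.cos θ - Complex.I * m) * E θ) θ := by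
    intro θ
    have h1 : HasDerivAt (fun θ : ℝ => Complex.I * r * (Real.sin θ : ℂ))
        (Complex.I * r * Real.cos θ) θ :=
      ((Real.hasDerivAt_sin θ).ofReal_comp).const_mul (Complex.I * r)
    have h2 : HasDerivAt (fun θ : ℝ => -(Complex.I * m * (θ : ℂ)))
        (-(Complex.I * m)) θ := by
      simpa [Pi.neg_def] using (((hasDerivAt_id θ).ofReal_comp).const_mul (Complex.I * m)).neg
    have := (h1.cexp).mul (h2.cexp)
    refine this.congr_deriv ?_
    simp only [hE]
    ring
  have hdc : Continuous (fun θ : ℝ =>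
      (Complex.I * r * Real.cos θ - Complex.I * m) * E θ) := by
    rw [hE]; fun_prop
  have h0 : (∫ θ in (0:ℝ)..(2 * Real.pi),
      (Complex.I * r * Real.cos θ - Complex.I * m) * E θ) = 0 := by
    rw [intervalIntegral.integral_eq_sub_of_hasDerivAt (fun θ _ => hd θ)
      (hdc.intervalIntegrable _ _)]
    have h2π : E (2 * Real.pi) = 1 := by
      rw [hE]
      simp only [Real.sin_two_pi, Complex.ofReal_zero, mul_zero, Complex.exp_zero, one_mul]
      have : -(Complex.I * m * ((2 * Real.pi : ℝ) : ℂ)) = ((-(m:ℤ) : ℤ) : ℂ) * (2 * Real.pi * Complex.I) := by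
        push_cast; ring
      rw [this, Complex.exp_int_mul_two_pi_mul_I]
    have h00 : E 0 = 1 := by
      rw [hE]; simp
    rw [h2π, h00, sub_self]
  -- pointwise identity
  have hpt : ∀ θ : ℝ, (m : ℂ) * E θ - r * E₁ θ - r * (Complex.I * Real.sin θ * E θ)
      = Complex.I * ((Complex.I * r * Real.cos θ - Complex.I * m) * E θ) := by
    intro θ
    have hsplit : Complex.exp (-(Complex.I * (m + 1 : ℕ) * θ))
        = Complex.exp (-(Complex.I * m * θ)) * Complex.exp (-(Complex.I * θ)) := by
      rw [← Complex.exp_add]; push_cast; ring_nf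
    have hcs : Complex.exp (-(Complex.I * (θ:ℝ))) = (Real.cos θ : ℂ) - (Real.sin θ : ℂ) * Complex.I := by
      have h : -(Complex.I * (θ:ℝ)) = ((-θ : ℝ) : ℂ) * Complex.I := by push_cast; ring
      rw [h, Complex.exp_mul_I, ← Complex.ofReal_cos, ← Complex.ofReal_sin,
        Real.cos_neg, Real.sin_neg]
      push_cast; ring
    rw [hE₁]
    simp only [hsplit, hcs, hE]
    linear_combination (((m : ℂ) - r * Real.cos θ) *
      (Complex.exp (Complex.I * r * Real.sin θ) * Complex.exp (-(Complex.I * m * θ)))) *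
      Complex.I_sq
  have hintE : IntervalIntegrable E volume 0 (2 * Real.pi) := by
    apply Continuous.intervalIntegrable; rw [hE]; fun_prop
  have hintE₁ : IntervalIntegrable E₁ volume 0 (2 * Real.pi) := by
    apply Continuous.intervalIntegrable; rw [hE₁]; fun_prop
  have hintA : IntervalIntegrable (fun θ : ℝ => (r:ℂ) * (Complex.I * Real.sin θ * E θ))
      volume 0 (2 * Real.pi) := by
    apply Continuous.intervalIntegrable; rw [hE]; fun_prop
  have key : (m : ℂ) * (∫ θ in (0:ℝ)..(2 * Real.pi), E θ)
      - r * (∫ θ in (0:ℝ)..(2 * Real.pi), E₁ θ)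
      - r * (∫ θ in (0:ℝ)..(2 * Real.pi), Complex.I * Real.sin θ * E θ) = 0 := by
    rw [← intervalIntegral.integral_const_mul, ← intervalIntegral.integral_const_mul,
      ← intervalIntegral.integral_const_mul,
      ← intervalIntegral.integral_sub (hintE.const_mul _) (hintE₁.const_mul _),
      ← intervalIntegral.integral_sub ((hintE.const_mul _).sub (hintE₁.const_mul _)) hintA]
    simp only [hpt]
    rw [intervalIntegral.integral_const_mul, h0, mul_zero]
  show (r:ℂ) * ((1 / (2 * Real.pi) : ℂ) * ∫ θ in (0:ℝ)..(2 * Real.pi),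
      Complex.I * Real.sin θ * E θ) = _
  rw [besselJ, besselJ]
  have eB : (∫ θ in (0:ℝ)..(2 * Real.pi),
      Complex.exp (Complex.I * r * Real.sin θ) * Complex.exp (-(Complex.I * m * θ)))
      = ∫ θ in (0:ℝ)..(2 * Real.pi), E θ := rfl
  have eB₁ : (∫ θ in (0:ℝ)..(2 * Real.pi),
      Complex.exp (Complex.I * r * Real.sin θ) * Complex.exp (-(Complex.I * (m+1:ℕ) * θ)))
      = ∫ θ in (0:ℝ)..(2 * Real.pi), E₁ θ := rfl
  rw [eB, eB₁]
  linear_combination (-(1 : ℂ) / (2 * Real.pi)) * key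

lemma hasDerivAt_fBessel (m : ℕ) {r : ℝ} (hr : 0 < r) :
    HasDerivAt (fBessel m) (-(r:ℂ) * fBessel (m+1) r) r := by
  have hrc : ((r:ℂ)) ≠ 0 := by
    simpa using hr.ne'
  have hpow : ((r:ℂ))^m ≠ 0 := pow_ne_zero _ hrc
  have hden : HasDerivAt (fun s : ℝ => ((s:ℂ))^m) ((m:ℂ) * (r:ℂ)^(m-1)) r :=
    (hasDerivAt_pow m ((r:ℂ))).comp_ofReal
  have hJ := hasDerivAt_besselJ m r
  have h := hJ.div hden hpow
  have hrec := besselJ_rec m r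
  have : -(r:ℂ) * fBessel (m+1) r
      = (besselJ' m r * (r:ℂ)^m - besselJ m r * ((m:ℂ) * (r:ℂ)^(m-1))) / ((r:ℂ)^m)^2 := by
    rw [fBessel]
    cases m with
    | zero =>
      have h0 : besselJ' 0 r = -besselJ 1 r := by
        apply mul_left_cancel₀ hrc
        linear_combination hrec
      simp only [Nat.cast_zero, pow_zero, zero_mul, mul_zero, sub_zero, pow_one, one_pow,
        div_one, mul_one, h0]
      field_simp
      ring
    | succ n =>
      have hrecn := besselJ_rec (n+1) r
      simp only [Nat.add_sub_cancel]
      field_simp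
      push_cast
      push_cast at hrecn
      linear_combination (-(r:ℂ)^(2*n+2)) * hrecn
  rw [this]
  exact h

lemma hasDerivAt_term (c : ℂ) (e p : ℕ) {r : ℝ} (hr : 0 < r) :
    HasDerivAt (fun s : ℝ => c * (s:ℂ)^e * fBessel p s)
      (c * ((e:ℂ) * (r:ℂ)^(e-1)) * fBessel p r
        + c * (r:ℂ)^e * (-(r:ℂ) * fBessel (p+1) r)) r := by
  have h1 : HasDerivAt (fun s : ℝ => c * (s:ℂ)^e) (c * ((e:ℂ)*(r:ℂ)^(e-1))) r := by
    simpa [mul_comm] using ((hasDerivAt_pow e ((r:ℂ))).comp_ofReal).const_mul c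
  exact h1.mul (hasDerivAt_fBessel p hr)

lemma iterate_deriv_succ (m n : ℕ) (F : ℝ → ℂ)
    (hF : ∀ s : ℝ, 0 < s → deriv^[n] (fBessel m) s = F s)
    {r : ℝ} (hr : 0 < r) : deriv^[n+1] (fBessel m) r = deriv F r := by
  rw [Function.iterate_succ_apply']
  apply Filter.EventuallyEq.deriv_eq
  filter_upwards [isOpen_Ioi.mem_nhds hr] with s hs
  exact hF s hs

lemma sum_shift (k : ℕ) (T1 T2 R : ℕ → ℂ) (h0 : T1 0 = 0)
    (hmid : ∀ j < k, T1 (j+1) + T2 j = R j) (hlast : T2 k = R k) :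
    (∑ j ∈ Finset.range (k+1), (T1 j + T2 j)) = ∑ j ∈ Finset.range (k+1), R j := by
  rw [Finset.sum_add_distrib, Finset.sum_range_succ' T1 k, Finset.sum_range_succ T2 k,
    Finset.sum_range_succ R k, h0, add_zero]
  have hm : ∑ j ∈ Finset.range k, T1 (j+1) + ∑ j ∈ Finset.range k, T2 j
      = ∑ j ∈ Finset.range k, R j := by
    rw [← Finset.sum_add_distrib]
    exact Finset.sum_congr rfl fun j hj => hmid j (Finset.mem_range.mp hj)
  linear_combination hm + hlast

lemma sum_shift' (k : ℕ) (T1 T2 R : ℕ → ℂ) (h0 : T1 0 = R 0)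
    (hmid : ∀ j < k, T1 (j+1) + T2 j = R (j+1)) (hlast : T2 k = R (k+1)) :
    (∑ j ∈ Finset.range (k+1), (T1 j + T2 j)) = ∑ j ∈ Finset.range (k+2), R j := by
  rw [Finset.sum_add_distrib, Finset.sum_range_succ' T1 k, Finset.sum_range_succ T2 k,
    Finset.sum_range_succ R (k+1), Finset.sum_range_succ' R k]
  have hm : ∑ j ∈ Finset.range k, T1 (j+1) + ∑ j ∈ Finset.range k, T2 j
      = ∑ j ∈ Finset.range k, R (j+1) := by
    rw [← Finset.sum_add_distrib]
    exact Finset.sum_congr rfl fun j hj => hmid j (Finset.mem_range.mp hj)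
  linear_combination hm + h0 + hlast

/-- The combinatorial lemma for higher derivatives of `f_m(r) = J_m(r)/r^m`:
with the coefficients `a_{j,k}`, `b_{j,k}` defined by the stated recursion, all diagonal
coefficients equal `1`, all coefficients are positive, and the even/odd order derivatives of `f_m`
are the stated linear combinations of the functions `r^{2j} f_{m+k+j}(r)`. -/
theorem stmt9 (a b : ℕ → ℕ → ℝ)
    (ha00 : a 0 0 = 1)
    (hbkk : ∀ k : ℕ, b k k = a k k)
    (hbjk : ∀ j k : ℕ, j < k → b j k = 2 * (j + 1) * a (j + 1) k + a j k)
    (ha0k : ∀ k : ℕ, a 0 (k + 1) = b 0 k)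
    (hajk : ∀ j k : ℕ, 1 ≤ j → j ≤ k → a j (k + 1) = (2 * j + 1) * b j k + b (j - 1) k)
    (hakk : ∀ k : ℕ, a (k + 1) (k + 1) = b k k) :
    (∀ k : ℕ, a k k = 1 ∧ b k k = 1) ∧
    (∀ j k : ℕ, j ≤ k → 0 < a j k ∧ 0 < b j k) ∧
    (∀ (m k : ℕ) (r : ℝ), 0 < r →
      deriv^[2 * k] (fBessel m) r =
        ∑ j ∈ Finset.range (k + 1),
          (-1 : ℂ) ^ (j + k) * (a j k : ℂ) * (r : ℂ) ^ (2 * j) * fBessel (m + k + j) r) ∧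
    (∀ (m k : ℕ) (r : ℝ), 0 < r →
      deriv^[2 * k + 1] (fBessel m) r =
        ∑ j ∈ Finset.range (k + 1),
          (-1 : ℂ) ^ (j + k + 1) * (b j k : ℂ) * (r : ℂ) ^ (2 * j + 1) *
            fBessel (m + k + j + 1) r) := by
  -- diagonal coefficients
  have diagA : ∀ k : ℕ, a k k = 1 := by
    intro k
    induction k with
    | zero => exact ha00
    | succ n ih => rw [hakk, hbkk, ih]
  -- positivity
  have pos : ∀ k : ℕ, ∀ j ≤ k, 0 < a j k ∧ 0 < b j k := by
    intro k
    induction k with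
    | zero =>
      intro j hj
      interval_cases j
      refine ⟨by rw [ha00]; norm_num, by rw [hbkk, ha00]; norm_num⟩
    | succ n ih =>
      have hA : ∀ j ≤ n + 1, 0 < a j (n + 1) := by
        intro j hj
        rcases Nat.eq_or_lt_of_le hj with h | h
        · rw [h, hakk]
          exact (ih n le_rfl).2
        · have hjn : j ≤ n := Nat.lt_succ_iff.mp h
          rcases Nat.eq_zero_or_pos j with rfl | hj1
          · rw [ha0k]
            exact (ih 0 (Nat.zero_le n)).2
          · rw [hajk j n hj1 hjn]
            have hb1 := (ih j hjn).2
            have hb2 := (ih (j - 1) (le_trans (Nat.sub_le j 1) hjn)).2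
            have hj0 : (0:ℝ) ≤ 2 * (j:ℝ) := by positivity
            nlinarith
      intro j hj
      refine ⟨hA j hj, ?_⟩
      rcases Nat.eq_or_lt_of_le hj with h | h
      · rw [h, hbkk]
        exact hA (n + 1) le_rfl
      · rw [hbjk j (n + 1) h]
        have h1 := hA (j + 1) h
        have h2 := hA j hj
        have hj0 : (0:ℝ) ≤ 2 * (j:ℝ) := by positivity
        nlinarith
  -- base case for derivatives
  have base : ∀ (m : ℕ) (r : ℝ), 0 < r → deriv^[2 * 0] (fBessel m) r =
      ∑ j ∈ Finset.range (0 + 1),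
        (-1 : ℂ) ^ (j + 0) * (a j 0 : ℂ) * (r : ℂ) ^ (2 * j) * fBessel (m + 0 + j) r := by
    intro m r hr
    simp [ha00]
  -- odd step
  have step_odd : ∀ k : ℕ,
      (∀ (m : ℕ) (r : ℝ), 0 < r → deriv^[2 * k] (fBessel m) r =
        ∑ j ∈ Finset.range (k + 1),
          (-1 : ℂ) ^ (j + k) * (a j k : ℂ) * (r : ℂ) ^ (2 * j) * fBessel (m + k + j) r) →
      (∀ (m : ℕ) (r : ℝ), 0 < r → deriv^[2 * k + 1] (fBessel m) r =
        ∑ j ∈ Finset.range (k + 1),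
          (-1 : ℂ) ^ (j + k + 1) * (b j k : ℂ) * (r : ℂ) ^ (2 * j + 1) *
            fBessel (m + k + j + 1) r) := by
    intro k hek m r hr
    have h1 := iterate_deriv_succ m (2 * k)
      (fun s => ∑ j ∈ Finset.range (k + 1),
        (-1 : ℂ) ^ (j + k) * (a j k : ℂ) * (s : ℂ) ^ (2 * j) * fBessel (m + k + j) s)
      (fun s hs => hek m s hs) hr
    rw [h1]
    have hD : HasDerivAt (fun s : ℝ => ∑ j ∈ Finset.range (k + 1),
        (-1 : ℂ) ^ (j + k) * (a j k : ℂ) * (s : ℂ) ^ (2 * j) * fBessel (m + k + j) s)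
        (∑ j ∈ Finset.range (k + 1),
          ((-1 : ℂ) ^ (j + k) * (a j k : ℂ) * (((2 * j : ℕ) : ℂ) * (r : ℂ) ^ (2 * j - 1)) *
              fBessel (m + k + j) r
            + (-1 : ℂ) ^ (j + k) * (a j k : ℂ) * (r : ℂ) ^ (2 * j) *
              (-(r : ℂ) * fBessel (m + k + j + 1) r))) r :=
      HasDerivAt.fun_sum (fun j _ => hasDerivAt_term _ _ _ hr)
    rw [hD.deriv]
    refine sum_shift k _ _ _ ?_ ?_ ?_
    · norm_num
    · intro j hj
      have e1 : 2 * (j + 1) - 1 = 2 * j + 1 := by omega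
      have e2 : m + k + (j + 1) = m + k + j + 1 := by omega
      have e3 : j + 1 + k = j + k + 1 := by omega
      rw [e1, e2, e3]
      have hbc : (b j k : ℂ) = 2 * ((j : ℂ) + 1) * (a (j + 1) k : ℂ) + (a j k : ℂ) := by
        exact_mod_cast hbjk j k hj
      push_cast
      linear_combination ((-1 : ℂ) ^ (j + k) * (r : ℂ) ^ (2 * j + 1) *
        fBessel (m + k + j + 1) r) * hbc
    · have hbkkc : (b k k : ℂ) = (a k k : ℂ) := by exact_mod_cast hbkk k
      linear_combination ((-1 : ℂ) ^ (k + k) * (r : ℂ) ^ (2 * k + 1) *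
        fBessel (m + k + k + 1) r) * hbkkc
  -- even step
  have step_even : ∀ k : ℕ,
      (∀ (m : ℕ) (r : ℝ), 0 < r → deriv^[2 * k + 1] (fBessel m) r =
        ∑ j ∈ Finset.range (k + 1),
          (-1 : ℂ) ^ (j + k + 1) * (b j k : ℂ) * (r : ℂ) ^ (2 * j + 1) *
            fBessel (m + k + j + 1) r) →
      (∀ (m : ℕ) (r : ℝ), 0 < r → deriv^[2 * (k + 1)] (fBessel m) r =
        ∑ j ∈ Finset.range (k + 1 + 1),
          (-1 : ℂ) ^ (j + (k + 1)) * (a j (k + 1) : ℂ) * (r : ℂ) ^ (2 * j) *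
            fBessel (m + (k + 1) + j) r) := by
    intro k hok m r hr
    have h1 := iterate_deriv_succ m (2 * k + 1)
      (fun s => ∑ j ∈ Finset.range (k + 1),
        (-1 : ℂ) ^ (j + k + 1) * (b j k : ℂ) * (s : ℂ) ^ (2 * j + 1) *
          fBessel (m + k + j + 1) s)
      (fun s hs => hok m s hs) hr
    rw [show 2 * (k + 1) = 2 * k + 1 + 1 from by ring, h1]
    have hD : HasDerivAt (fun s : ℝ => ∑ j ∈ Finset.range (k + 1),
        (-1 : ℂ) ^ (j + k + 1) * (b j k : ℂ) * (s : ℂ) ^ (2 * j + 1) *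
          fBessel (m + k + j + 1) s)
        (∑ j ∈ Finset.range (k + 1),
          ((-1 : ℂ) ^ (j + k + 1) * (b j k : ℂ) * (((2 * j + 1 : ℕ) : ℂ) *
              (r : ℂ) ^ (2 * j + 1 - 1)) * fBessel (m + k + j + 1) r
            + (-1 : ℂ) ^ (j + k + 1) * (b j k : ℂ) * (r : ℂ) ^ (2 * j + 1) *
              (-(r : ℂ) * fBessel (m + k + j + 1 + 1) r))) r :=
      HasDerivAt.fun_sum (fun j _ => hasDerivAt_term _ _ _ hr)
    rw [hD.deriv]
    refine sum_shift' k _ _ _ ?_ ?_ ?_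
    · have e2 : m + k + 0 + 1 = m + (k + 1) + 0 := by omega
      rw [e2]
      have hac : (a 0 (k + 1) : ℂ) = (b 0 k : ℂ) := by exact_mod_cast ha0k k
      push_cast
      linear_combination ((-1 : ℂ) ^ (k + 1) * fBessel (m + (k + 1) + 0) r) * hac.symm
    · intro j hj
      have e1 : 2 * (j + 1) + 1 - 1 = 2 * j + 2 := by omega
      have e2 : m + k + (j + 1) + 1 = m + (k + 1) + (j + 1) := by omega
      have e3 : m + k + j + 1 + 1 = m + (k + 1) + (j + 1) := by omega
      rw [e1, e2, e3]
      have ha1 : a (j + 1) (k + 1) = (2 * (j + 1) + 1) * b (j + 1) k + b j k := by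
        have := hajk (j + 1) k (by omega) (by omega)
        simpa using this
      have hac : (a (j + 1) (k + 1) : ℂ)
          = (2 * ((j : ℂ) + 1) + 1) * (b (j + 1) k : ℂ) + (b j k : ℂ) := by
        exact_mod_cast ha1
      push_cast
      linear_combination ((-1 : ℂ) ^ (j + 1 + (k + 1)) * (r : ℂ) ^ (2 * j + 2) *
        fBessel (m + (k + 1) + (j + 1)) r) * hac.symm
    · have e2 : m + k + k + 1 + 1 = m + (k + 1) + (k + 1) := by omega
      rw [e2]
      have hac : (a (k + 1) (k + 1) : ℂ) = (b k k : ℂ) := by exact_mod_cast hakk k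
      linear_combination ((-1 : ℂ) ^ (k + 1 + (k + 1)) * (r : ℂ) ^ (2 * (k + 1)) *
        fBessel (m + (k + 1) + (k + 1)) r) * hac.symm
  -- assemble
  have evens : ∀ k : ℕ, ∀ (m : ℕ) (r : ℝ), 0 < r → deriv^[2 * k] (fBessel m) r =
      ∑ j ∈ Finset.range (k + 1),
        (-1 : ℂ) ^ (j + k) * (a j k : ℂ) * (r : ℂ) ^ (2 * j) * fBessel (m + k + j) r := by
    intro k
    induction k with
    | zero => exact base
    | succ n ih => exact step_even n (step_odd n ih)
  refine ⟨fun k => ⟨diagA k, by rw [hbkk]; exact diagA k⟩,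
    fun j k hj => pos k j hj,
    fun m k r hr => evens k m r hr,
    fun m k r hr => step_odd k (evens k) m r hr⟩
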